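/- If (M N) ▷* μα.P, then either (i) M ▷* λy.M₁ and M₁[y:=N] ▷* μα.P, or (ii) M ▷* μα.M₁ and M₁[α=_r N] ▷* P, or (iii) N ▷* μα.N₁ and N₁[α=_l M] ▷* P. -/

import Mathlib

/-- λμ-terms: variables, λ-abstraction, application, μ-abstraction, named term (α M). -/
inductive Trm : Type
  | var : ℕ → Trm
  | lam : ℕ → Trm → Trm
  | app : Trm → Trm → Trm
  | mu  : ℕ → Trm → Trm
  | mv  : ℕ → Trm → Trm
  deriving DecidableEq

namespace Trm

/-- Substitution M[x:=N]. -/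
def subst : Trm → ℕ → Trm → Trm
  | var y, x, N => if y = x then N else var y
  | lam y B, x, N => if y = x then lam y B else lam y (subst B x N)
  | app A B, x, N => app (subst A x N) (subst B x N)
  | mu a B, x, N => mu a (subst B x N)
  | mv a B, x, N => mv a (subst B x N)

/-- M[α=_r N]: replace each subterm (α U) by (α (U N)). -/
def rsub : Trm → ℕ → Trm → Trm
  | var y, _, _ => var y
  | lam y B, a, N => lam y (rsub B a N)
  | app A B, a, N => app (rsub A a N) (rsub B a N)
  | mu b B, a, N => if b = a then mu b B else mu b (rsub B a N)
  | mv b B, a, N => if b = a then mv b (app (rsub B a N) N) else mv b (rsub B a N)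

/-- M[α=_l N]: replace each subterm (α U) by (α (N U)). -/
def lsub : Trm → ℕ → Trm → Trm
  | var y, _, _ => var y
  | lam y B, a, N => lam y (lsub B a N)
  | app A B, a, N => app (lsub A a N) (lsub B a N)
  | mu b B, a, N => if b = a then mu b B else mu b (lsub B a N)
  | mv b B, a, N => if b = a then mv b (app N (lsub B a N)) else mv b (lsub B a N)

/-- One-step βμμ'-reduction (compatible closure). -/
inductive Red : Trm → Trm → Prop
  | beta (x M N) : Red (app (lam x M) N) (subst M x N)
  | muR (a M N) : Red (app (mu a M) N) (mu a (rsub M a N))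
  | muL (a M N) : Red (app M (mu a N)) (mu a (lsub N a M))
  | appL {M M'} (N) : Red M M' → Red (app M N) (app M' N)
  | appR (M) {N N'} : Red N N' → Red (app M N) (app M N')
  | lamC (x) {M M'} : Red M M' → Red (lam x M) (lam x M')
  | muC (a) {M M'} : Red M M' → Red (mu a M) (mu a M')
  | mvC (a) {M M'} : Red M M' → Red (mv a M) (mv a M')

/-- ▷*: reflexive transitive closure. -/
def Reds : Trm → Trm → Prop := Relation.ReflTransGen Red

/-- Strong normalization: no infinite reduction sequence. -/
def SN (M : Trm) : Prop := Acc (fun a b => Red b a) M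

/-- Left-nested application (h M₁ ... Mₙ). -/
def appList (h : Trm) (l : List Trm) : Trm := l.foldl app h

end Trm

namespace Trm

lemma reds_appL {M M'} (N) (h : Reds M M') : Reds (app M N) (app M' N) :=
  Relation.ReflTransGen.lift (fun X => app X N) (fun _ _ => Red.appL N) _ _ h

lemma reds_appR (M) {N N'} (h : Reds N N') : Reds (app M N) (app M N') :=
  Relation.ReflTransGen.lift (fun X => app M X) (fun _ _ => Red.appR M) _ _ h

lemma reds_app {M M' N N'} (h1 : Reds M M') (h2 : Reds N N') :
    Reds (app M N) (app M' N') :=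
  (reds_appL N h1).trans (reds_appR M' h2)

lemma reds_lam (x) {M M'} (h : Reds M M') : Reds (lam x M) (lam x M') :=
  Relation.ReflTransGen.lift (lam x) (fun _ _ => Red.lamC x) _ _ h

lemma reds_mu (b) {M M'} (h : Reds M M') : Reds (mu b M) (mu b M') :=
  Relation.ReflTransGen.lift (mu b) (fun _ _ => Red.muC b) _ _ h

lemma reds_mv (b) {M M'} (h : Reds M M') : Reds (mv b M) (mv b M') :=
  Relation.ReflTransGen.lift (mv b) (fun _ _ => Red.mvC b) _ _ h

lemma mu_reds {b : ℕ} {X T : Trm} (h : Reds (mu b X) T) :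
    ∃ X', T = mu b X' ∧ Reds X X' := by
  induction h with
  | refl => exact ⟨X, rfl, Relation.ReflTransGen.refl⟩
  | tail _ hstep ih =>
    obtain ⟨X', rfl, hX⟩ := ih
    cases hstep with
    | muC _ h' => exact ⟨_, rfl, hX.tail h'⟩

lemma subst_reds (X : Trm) (y : ℕ) {N N'} (h : Red N N') :
    Reds (subst X y N) (subst X y N') := by
  induction X with
  | var z =>
    simp only [subst]
    split
    · exact Relation.ReflTransGen.single h
    · exact Relation.ReflTransGen.refl
  | lam z B ih =>
    simp only [subst]; split
    · exact Relation.ReflTransGen.refl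
    · exact reds_lam z ih
  | app A B ihA ihB => exact reds_app ihA ihB
  | mu b B ih => exact reds_mu b ih
  | mv b B ih => exact reds_mv b ih

lemma rsub_reds (X : Trm) (b : ℕ) {N N'} (h : Red N N') :
    Reds (rsub X b N) (rsub X b N') := by
  induction X with
  | var z => exact Relation.ReflTransGen.refl
  | lam z B ih => exact reds_lam z ih
  | app A B ihA ihB => exact reds_app ihA ihB
  | mu c B ih =>
    simp only [rsub]; split
    · exact Relation.ReflTransGen.refl
    · exact reds_mu c ih
  | mv c B ih =>
    simp only [rsub]; split
    · exact reds_mv c (reds_app ih (Relation.ReflTransGen.single h))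
    · exact reds_mv c ih

lemma lsub_reds (X : Trm) (b : ℕ) {M M'} (h : Red M M') :
    Reds (lsub X b M) (lsub X b M') := by
  induction X with
  | var z => exact Relation.ReflTransGen.refl
  | lam z B ih => exact reds_lam z ih
  | app A B ihA ihB => exact reds_app ihA ihB
  | mu c B ih =>
    simp only [lsub]; split
    · exact Relation.ReflTransGen.refl
    · exact reds_mu c ih
  | mv c B ih =>
    simp only [lsub]; split
    · exact reds_mv c (reds_app (Relation.ReflTransGen.single h) ih)
    · exact reds_mv c ih

end Trm

open Trm

theorem app_reds_mu {M N P : Trm} {a : ℕ}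
    (h : Reds (app M N) (mu a P)) :
    (∃ (y : ℕ) (M₁ : Trm), Reds M (lam y M₁) ∧ Reds (subst M₁ y N) (mu a P)) ∨
    (∃ M₁ : Trm, Reds M (mu a M₁) ∧ Reds (rsub M₁ a N) P) ∨
    (∃ N₁ : Trm, Reds N (mu a N₁) ∧ Reds (lsub N₁ a M) P) := by
  suffices H : ∀ Q, Reds Q (mu a P) → ∀ M N : Trm, Q = app M N →
      (∃ (y : ℕ) (M₁ : Trm), Reds M (lam y M₁) ∧ Reds (subst M₁ y N) (mu a P)) ∨
      (∃ M₁ : Trm, Reds M (mu a M₁) ∧ Reds (rsub M₁ a N) P) ∨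
      (∃ N₁ : Trm, Reds N (mu a N₁) ∧ Reds (lsub N₁ a M) P) from
    H _ h M N rfl
  intro Q hQ
  induction hQ using Relation.ReflTransGen.head_induction_on with
  | refl => intro M N hMN; simp at hMN
  | head hstep htail ih =>
    intro M N hMN
    subst hMN
    cases hstep with
    | beta x M0 N => exact Or.inl ⟨x, M0, Relation.ReflTransGen.refl, htail⟩
    | muR b M0 N =>
      obtain ⟨X', hX, hr⟩ := mu_reds htail
      obtain ⟨rfl, rfl⟩ : b = a ∧ X' = P := by
        cases hX; exact ⟨rfl, rfl⟩
      exact Or.inr (Or.inl ⟨M0, Relation.ReflTransGen.refl, hr⟩)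
    | muL b M0 N0 =>
      obtain ⟨X', hX, hr⟩ := mu_reds htail
      obtain ⟨rfl, rfl⟩ : b = a ∧ X' = P := by
        cases hX; exact ⟨rfl, rfl⟩
      exact Or.inr (Or.inr ⟨N0, Relation.ReflTransGen.refl, hr⟩)
    | appL N hM =>
      rcases ih _ _ rfl with ⟨y, M₁, h1, h2⟩ | ⟨M₁, h1, h2⟩ | ⟨N₁, h1, h2⟩
      · exact Or.inl ⟨y, M₁, Relation.ReflTransGen.head hM h1, h2⟩
      · exact Or.inr (Or.inl ⟨M₁, Relation.ReflTransGen.head hM h1, h2⟩)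
      · exact Or.inr (Or.inr ⟨N₁, h1, (lsub_reds N₁ a hM).trans h2⟩)
    | appR M hN =>
      rcases ih _ _ rfl with ⟨y, M₁, h1, h2⟩ | ⟨M₁, h1, h2⟩ | ⟨N₁, h1, h2⟩
      · exact Or.inl ⟨y, M₁, h1, (subst_reds M₁ y hN).trans h2⟩
      · exact Or.inr (Or.inl ⟨M₁, h1, (rsub_reds M₁ a hN).trans h2⟩)
      · exact Or.inr (Or.inr ⟨N₁, Relation.ReflTransGen.head hN h1, h2⟩)
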